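/- Any two minimal linear magic intervals must overlap: if A₁ and A₂ are contiguous intervals of qubits such that magic is extractable from A₁ (all operations outside A₁'s complement cannot affect it) and from A₂, and A₁ ∩ A₂ = ∅, then a contradiction follows, since operations supported on A₂ ⊆ complement(A₁) could extract (hence reduce) the magic, while by definition of extractability from A₁, operations on the complement of A₁ cannot reduce the magic in A₁. -/
import Mathlib


open Matrix BigOperators Finset

/-- The four single-qubit Pauli matrices `I, X, Y, Z`. -/
noncomputable def pauli1 : Fin 4 → Matrix (Fin 2) (Fin 2) ℂ :=
  ![(1 : Matrix (Fin 2) (Fin 2) ℂ),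
    !![0, 1; 1, 0],
    !![0, -Complex.I; Complex.I, 0],
    !![1, 0; 0, -1]]

/-- The `n`-qubit Pauli string `⨂ₖ pauli1 (s k)` as a matrix on `(Fin n → Fin 2)`. -/
noncomputable def pauliString {n : ℕ} (s : Fin n → Fin 4) :
    Matrix (Fin n → Fin 2) (Fin n → Fin 2) ℂ :=
  Matrix.of fun i j => ∏ k, pauli1 (s k) (i k) (j k)

/-- `M` is a Pauli operator with phase `±1`. -/
def IsPauliPM {n : ℕ} (M : Matrix (Fin n → Fin 2) (Fin n → Fin 2) ℂ) : Prop :=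
  ∃ (ε : ℂ) (s : Fin n → Fin 4), (ε = 1 ∨ ε = -1) ∧ M = ε • pauliString s

/-- `M` is a `±1`-phase Pauli operator whose support is contained in `A`. -/
def SuppIn {n : ℕ} (A : Finset (Fin n)) (M : Matrix (Fin n → Fin 2) (Fin n → Fin 2) ℂ) : Prop :=
  ∃ (ε : ℂ) (s : Fin n → Fin 4), (ε = 1 ∨ ε = -1) ∧ M = ε • pauliString s ∧
    ∀ k ∉ A, s k = 0

/-- The element `∏_{i : f i} g i` of the group generated by the (commuting) `g i`. -/
noncomputable def grpElem {n m : ℕ} (g : Fin m → Matrix (Fin n → Fin 2) (Fin n → Fin 2) ℂ)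
    (f : Fin m → Bool) : Matrix (Fin n → Fin 2) (Fin n → Fin 2) ℂ :=
  ((List.finRange m).map (fun i => if f i then g i else 1)).prod

/-- Mixed-state stabilizer 2-Rényi entropy
`M̃₂(ρ) = −log₂( Σ_P Tr(ρP)⁴ / Σ_P Tr(ρP)² )`. -/
noncomputable def sre2 {n : ℕ} (ρ : Matrix (Fin n → Fin 2) (Fin n → Fin 2) ℂ) : ℝ :=
  - Real.logb 2 (((∑ P : Fin n → Fin 4, ((ρ * pauliString P).trace) ^ 4) /
      (∑ P : Fin n → Fin 4, ((ρ * pauliString P).trace) ^ 2)).re)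

/-- The logical coset `L⟨g⟩` has a (±1-phase) representative supported inside `A`. -/
def RepOn {n m : ℕ} (g : Fin m → Matrix (Fin n → Fin 2) (Fin n → Fin 2) ℂ)
    (A : Finset (Fin n)) (L : Matrix (Fin n → Fin 2) (Fin n → Fin 2) ℂ) : Prop :=
  ∃ f : Fin m → Bool, SuppIn A (L * grpElem g f)


lemma pauli1_mul_self (a : Fin 4) : pauli1 a * pauli1 a = 1 := by
  fin_cases a <;>
    · ext i j
      fin_cases i <;> fin_cases j <;>
        simp [pauli1, Matrix.mul_apply, Fin.sum_univ_two, Matrix.one_apply,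
          Complex.I_mul_I]

lemma pauliString_mul {n : ℕ} (s t : Fin n → Fin 4) :
    pauliString s * pauliString t =
      Matrix.of fun i j => ∏ k, (pauli1 (s k) * pauli1 (t k)) (i k) (j k) := by
  ext i j
  simp only [pauliString, Matrix.mul_apply, Matrix.of_apply]
  rw [Fintype.prod_sum]
  exact Finset.sum_congr rfl fun x _ => (Finset.prod_mul_distrib).symm

lemma pauliString_mul_self {n : ℕ} (s : Fin n → Fin 4) :
    pauliString s * pauliString s = 1 := by
  rw [pauliString_mul]
  ext i j
  simp only [Matrix.of_apply, pauli1_mul_self]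
  by_cases h : i = j
  · subst h; simp [Matrix.one_apply]
  · obtain ⟨k, hk⟩ := Function.ne_iff.mp h
    rw [Matrix.one_apply_ne h]
    exact Finset.prod_eq_zero (Finset.mem_univ k) (Matrix.one_apply_ne hk)

lemma pauliString_comm_of_disjoint {n : ℕ} (s t : Fin n → Fin 4)
    (hst : ∀ k, s k = 0 ∨ t k = 0) :
    pauliString s * pauliString t = pauliString t * pauliString s := by
  rw [pauliString_mul, pauliString_mul]
  have : ∀ k, pauli1 (s k) * pauli1 (t k) = pauli1 (t k) * pauli1 (s k) := by
    intro k
    rcases hst k with h | h <;> rw [h] <;>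
      simp [show pauli1 0 = 1 from rfl]
  ext i j
  simp only [Matrix.of_apply]
  exact Finset.prod_congr rfl fun k _ => by rw [this k]

lemma commute_grpElem {n m : ℕ} (g : Fin m → Matrix (Fin n → Fin 2) (Fin n → Fin 2) ℂ)
    (f : Fin m → Bool) (x : Matrix (Fin n → Fin 2) (Fin n → Fin 2) ℂ)
    (hx : ∀ i, Commute x (g i)) : Commute x (grpElem g f) := by
  apply Commute.list_prod_right
  intro y hy
  obtain ⟨i, _, rfl⟩ := List.mem_map.mp hy
  by_cases h : f i <;> simp [h, hx i, Commute.one_right]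

/-- two minimal linear magic intervals must overlap. In the stabilizer-code
formulation, magic being extractable from an interval means all logical cosets of the
[[n,1]] code have representatives supported on it; two disjoint intervals `A₁, A₂` both
supporting all logicals are impossible, since e.g. a representative of `X̄G` on `A₁` and
one of `Z̄G` on `A₂` would anticommute while having disjoint supports. -/
theorem stmt_15 {n m : ℕ} (hnm : n = m + 1)
    (g : Fin m → Matrix (Fin n → Fin 2) (Fin n → Fin 2) ℂ)
    (Xb Zb Yb : Matrix (Fin n → Fin 2) (Fin n → Fin 2) ℂ)
    (hg : ∀ i, IsPauliPM (g i))
    (hcomm : ∀ i i', g i * g i' = g i' * g i)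
    (hXb : IsPauliPM Xb) (hZb : IsPauliPM Zb)
    (hXcomm : ∀ i, Xb * g i = g i * Xb) (hZcomm : ∀ i, Zb * g i = g i * Zb)
    (hanti : Xb * Zb = -(Zb * Xb))
    (hYb : Yb = Complex.I • (Xb * Zb))
    (A₁ A₂ : Finset (Fin n)) (hdisj : Disjoint A₁ A₂)
    (h1 : RepOn g A₁ Xb ∧ RepOn g A₁ Yb ∧ RepOn g A₁ Zb)
    (h2 : RepOn g A₂ Xb ∧ RepOn g A₂ Yb ∧ RepOn g A₂ Zb) :
    False := by
  obtain ⟨f₁, ε₁, s₁, hε₁, hM₁, hs₁⟩ := h1.1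
  obtain ⟨f₂, ε₂, s₂, hε₂, hM₂, hs₂⟩ := h2.2.2
  set M₁ := Xb * grpElem g f₁ with hM₁def
  set M₂ := Zb * grpElem g f₂ with hM₂def
  -- disjoint supports
  have hst : ∀ k, s₁ k = 0 ∨ s₂ k = 0 := by
    intro k
    by_cases h : k ∈ A₁
    · exact Or.inr (hs₂ k (Finset.disjoint_left.mp hdisj h))
    · exact Or.inl (hs₁ k h)
  -- M₁ and M₂ commute
  have hcom : M₁ * M₂ = M₂ * M₁ := by
    rw [hM₁, hM₂, Algebra.smul_mul_assoc, Algebra.mul_smul_comm,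
      Algebra.smul_mul_assoc, Algebra.mul_smul_comm,
      pauliString_comm_of_disjoint s₁ s₂ hst, smul_comm]
  -- M₁ and M₂ anticommute
  have hG1Z : Commute Zb (grpElem g f₁) :=
    commute_grpElem g f₁ Zb fun i => (hZcomm i)
  have hG1G2 : Commute (grpElem g f₂) (grpElem g f₁) := by
    refine commute_grpElem g f₁ (grpElem g f₂) fun i => ?_
    refine (commute_grpElem g f₂ (g i) fun i' => ?_).symm
    exact (hcomm i i')
  have hG2X : Commute Xb (grpElem g f₂) :=
    commute_grpElem g f₂ Xb fun i => (hXcomm i)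
  have hacom : M₁ * M₂ = -(M₂ * M₁) := by
    calc M₁ * M₂ = Xb * (grpElem g f₁ * Zb) * grpElem g f₂ := by
          rw [hM₁def, hM₂def]; noncomm_ring
      _ = (Xb * Zb) * (grpElem g f₁ * grpElem g f₂) := by
          rw [← hG1Z.eq]; noncomm_ring
      _ = -((Zb * Xb) * (grpElem g f₂ * grpElem g f₁)) := by
          rw [hanti, ← hG1G2.eq]; noncomm_ring
      _ = -(Zb * (grpElem g f₂ * Xb) * grpElem g f₁) := by
          rw [← hG2X.eq]; noncomm_ring
      _ = -(M₂ * M₁) := by rw [hM₁def, hM₂def]; noncomm_ring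
  -- hence M₂ * M₁ = 0
  have hzero : M₂ * M₁ = 0 := by
    have : M₂ * M₁ + M₂ * M₁ = 0 := by
      nth_rewrite 1 [← hcom]; rw [hacom]; abel
    have h2 : (2 : ℂ) • (M₂ * M₁) = 0 := by rw [two_smul]; exact this
    have := smul_eq_zero.mp h2
    simpa using this
  -- but M₁ and M₂ are invertible: M * M = 1
  have hε₁sq : ε₁ * ε₁ = 1 := by rcases hε₁ with h | h <;> rw [h] <;> ring
  have hε₂sq : ε₂ * ε₂ = 1 := by rcases hε₂ with h | h <;> rw [h] <;> ring
  have hM₁sq : M₁ * M₁ = 1 := by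
    rw [hM₁, Algebra.smul_mul_assoc, Algebra.mul_smul_comm, smul_smul,
      hε₁sq, pauliString_mul_self, one_smul]
  have hM₂sq : M₂ * M₂ = 1 := by
    rw [hM₂, Algebra.smul_mul_assoc, Algebra.mul_smul_comm, smul_smul,
      hε₂sq, pauliString_mul_self, one_smul]
  have hone : (1 : Matrix (Fin n → Fin 2) (Fin n → Fin 2) ℂ) = 0 := by
    calc (1 : Matrix (Fin n → Fin 2) (Fin n → Fin 2) ℂ)
        = (M₂ * M₂) * (M₁ * M₁) := by rw [hM₁sq, hM₂sq, one_mul]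
      _ = M₂ * (M₂ * M₁) * M₁ := by noncomm_ring
      _ = 0 := by rw [hzero]; simp
  have := congrFun (congrFun hone (fun _ => 0)) (fun _ => 0)
  simp [Matrix.one_apply] at this
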